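/- Let (A, ν, T) be a probability-measure-preserving system, a₁, a₂ ∈ L²(A, ν), h ∈ C_c¹((0,∞)) and ξ ∈ 2πℤ \ {0}. Then for all t > 0: |∫₀^∞ h(z) e^{iξzt} ∫_A a̅₁(x) a₂(T^{⌊zt⌋}x) dν(x) dz| ≤ 2 ‖a₁‖_{L²} ‖a₂‖_{L²} ‖h‖_{BV} / (|ξ| t), where ‖h‖_{BV} = ∫₀^∞ |h'(z)| dz. -/

import Mathlib

open MeasureTheory Filter Set
open scoped ENNReal Topology

lemma cs_aux17 {A : Type*} [MeasurableSpace A] (ν : Measure A)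
    (f g : A → ℂ) (hf : MemLp f 2 ν) (hg : MemLp g 2 ν) :
    ‖∫ x, (starRingEnd ℂ) (f x) * g x ∂ν‖ ≤ (eLpNorm f 2 ν).toReal * (eLpNorm g 2 ν).toReal := by
  have h1 : ∫ x, (starRingEnd ℂ) (f x) * g x ∂ν = @inner ℂ _ _ (hf.toLp f) (hg.toLp g) := by
    rw [MeasureTheory.L2.inner_def]
    apply integral_congr_ae
    filter_upwards [hf.coeFn_toLp, hg.coeFn_toLp] with x h1 h2
    simp [h1, h2, RCLike.inner_apply]; ring
  rw [h1]
  calc ‖(inner ℂ (hf.toLp f) (hg.toLp g) : ℂ)‖ ≤ ‖hf.toLp f‖ * ‖hg.toLp g‖ := norm_inner_le_norm _ _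
  _ = _ := by rw [Lp.norm_toLp, Lp.norm_toLp]

noncomputable def Psi17 (ξ u : ℝ) : ℂ :=
  (Complex.exp (Complex.I * ξ * u) - 1) / (Complex.I * ξ)

lemma Psi17_int {ξ : ℝ} (hξ : ∃ m : ℤ, m ≠ 0 ∧ ξ = 2 * Real.pi * m) (n : ℤ) :
    Psi17 ξ (n : ℝ) = 0 := by
  obtain ⟨m, -, rfl⟩ := hξ
  have : Complex.I * (2 * Real.pi * m : ℝ) * (n : ℝ) = (m * n : ℤ) * (2 * Real.pi * Complex.I) := by
    push_cast; ring
  rw [Psi17, this, Complex.exp_int_mul_two_pi_mul_I, sub_self, zero_div]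

lemma Psi17_norm {ξ : ℝ} (hξ : ξ ≠ 0) (u : ℝ) : ‖Psi17 ξ u‖ ≤ 2 / |ξ| := by
  rw [Psi17, norm_div]
  have h1 : ‖Complex.I * (ξ:ℂ)‖ = |ξ| := by
    simp [map_mul]
  have h2 : ‖Complex.exp (Complex.I * ξ * u) - 1‖ ≤ 2 := by
    calc ‖Complex.exp (Complex.I * ξ * u) - 1‖ ≤ ‖Complex.exp (Complex.I * ξ * u)‖ + ‖(1:ℂ)‖ :=
      norm_sub_le _ _
    _ ≤ 2 := by
      have h3 : Complex.I * ξ * u = (ξ * u : ℝ) * Complex.I := by push_cast; ring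
      rw [h3]
      rw [Complex.norm_exp_ofReal_mul_I]; norm_num
  rw [h1]
  gcongr

lemma Psi17_hasDeriv {ξ : ℝ} (hξ : ξ ≠ 0) (t : ℝ) (z : ℝ) :
    HasDerivAt (fun z : ℝ => Psi17 ξ (z * t)) (Complex.exp (Complex.I * ξ * z * t) * t) z := by
  have hne : Complex.I * (ξ:ℂ) ≠ 0 := by
    simp [Complex.I_ne_zero, Complex.ofReal_eq_zero, hξ]
  have heq : (fun z : ℝ => Psi17 ξ (z * t)) =
      fun z : ℝ => (Complex.exp (Complex.I * ξ * t * (z:ℂ)) - 1) / (Complex.I * ξ) := by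
    funext z; rw [Psi17]; push_cast; ring_nf
  rw [heq]
  have h1 : HasDerivAt (fun z : ℝ => (z : ℂ)) 1 z := by
    simpa using (hasDerivAt_id z).ofReal_comp
  have h2 : HasDerivAt (fun z : ℝ => Complex.I * ξ * t * (z:ℂ)) (Complex.I * ξ * t) z := by
    simpa using h1.const_mul (Complex.I * ξ * t)
  have h3 := (h2.cexp.sub_const 1).div_const (Complex.I * ξ)
  refine h3.congr_deriv ?_
  have : Complex.I * (ξ:ℂ) * (z:ℂ) * (t:ℂ) = Complex.I * ξ * t * z := by ring
  rw [this]
  field_simp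
  ring_nf; field_simp [Complex.ofReal_ne_zero.mpr hξ]

set_option maxHeartbeats 1000000 in
theorem stmt17 {A : Type*} [MeasurableSpace A] (ν : Measure A) [IsProbabilityMeasure ν]
    (T : A → A) (hTm : Measurable T) (hT : MeasurePreserving T ν ν)
    (a₁ a₂ : A → ℂ) (ha₁ : MemLp a₁ 2 ν) (ha₂ : MemLp a₂ 2 ν)
    (h : ℝ → ℝ) (hh : ContDiff ℝ 1 h) (hsupp : HasCompactSupport h)
    (hpos : Function.support h ⊆ Set.Ioi (0 : ℝ))
    (ξ : ℝ) (hξ : ∃ m : ℤ, m ≠ 0 ∧ ξ = 2 * Real.pi * m)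
    (t : ℝ) (ht : 0 < t) :
    ‖∫ z in Set.Ioi (0 : ℝ), (h z : ℂ) * Complex.exp (Complex.I * ξ * z * t) *
        ∫ x, (starRingEnd ℂ) (a₁ x) * a₂ (T^[(⌊z * t⌋).toNat] x) ∂ν‖
    ≤ 2 * (eLpNorm a₁ 2 ν).toReal * (eLpNorm a₂ 2 ν).toReal *
        (∫ z in Set.Ioi (0 : ℝ), |deriv h z|) / (|ξ| * t) := by
  have hξ0 : ξ ≠ 0 := by
    obtain ⟨m, hm0, rfl⟩ := hξ
    simp [Real.pi_ne_zero, hm0]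
  have ht0 : t ≠ 0 := ht.ne'
  have htC : (t:ℂ) ≠ 0 := Complex.ofReal_ne_zero.mpr ht0
  set C₁ := (eLpNorm a₁ 2 ν).toReal with hC₁def
  set C₂ := (eLpNorm a₂ 2 ν).toReal with hC₂def
  set C := C₁ * C₂ with hCdef
  have hC0 : 0 ≤ C := mul_nonneg ENNReal.toReal_nonneg ENNReal.toReal_nonneg
  set F : ℕ → ℂ := fun k => ∫ x, (starRingEnd ℂ) (a₁ x) * a₂ (T^[k] x) ∂ν with hFdef
  have hF : ∀ k, ‖F k‖ ≤ C := by
    intro k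
    have hmp : MeasurePreserving (T^[k]) ν ν := hT.iterate k
    have hg : MemLp (fun x => a₂ (T^[k] x)) 2 ν := ha₂.comp_measurePreserving hmp
    have h1 := cs_aux17 ν a₁ (fun x => a₂ (T^[k] x)) ha₁ hg
    rwa [show eLpNorm (fun x => a₂ (T^[k] x)) 2 ν = eLpNorm a₂ 2 ν from
      eLpNorm_comp_measurePreserving ha₂.aestronglyMeasurable hmp] at h1
  set b : ℝ → ℂ := fun z => F (⌊z * t⌋).toNat with hbdef
  have hbm : AEStronglyMeasurable b volume := by
    apply Measurable.aestronglyMeasurable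
    exact (measurable_from_top (f := fun n : ℤ => F n.toNat)).comp
      ((measurable_id.mul_const t).floor)
  have hbC : ∀ z, ‖b z‖ ≤ C := fun z => hF _
  -- support radius
  obtain ⟨r, hr⟩ := hsupp.isBounded.subset_closedBall 0
  set R : ℝ := max r 0 + 1 with hRdef
  have hR0 : (0:ℝ) < R := by positivity
  have hhR : ∀ z : ℝ, R ≤ z → h z = 0 := by
    intro z hz
    apply image_eq_zero_of_notMem_tsupport
    intro hmem
    have := hr hmem
    rw [Real.closedBall_eq_Icc] at this
    have : z ≤ r := by simpa using this.2
    have : z ≤ max r 0 := le_trans this (le_max_left _ _)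
    linarith
  have hz0 : ∀ z : ℝ, z ≤ 0 → h z = 0 := by
    intro z hz
    by_contra hne
    have := hpos (Function.mem_support.mpr hne)
    simp only [Set.mem_Ioi] at this
    linarith
  -- continuity facts
  have hhc : Continuous h := hh.continuous
  have hh'c : Continuous (deriv h) := hh.continuous_deriv le_rfl
  have hPsiC : Continuous (fun z : ℝ => Psi17 ξ (z * t)) :=
    continuous_iff_continuousAt.mpr fun z => (Psi17_hasDeriv hξ0 t z).continuousAt
  have hexpC : Continuous (fun z : ℝ => Complex.exp (Complex.I * ξ * z * t)) := by
    apply Complex.continuous_exp.comp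
    continuity
  -- main functions
  set g : ℝ → ℂ := fun z => (h z : ℂ) * Psi17 ξ (z * t) * b z / (t : ℂ) with hgdef
  set φ₁ : ℝ → ℂ := fun z => ((deriv h z : ℝ) : ℂ) * Psi17 ξ (z * t) * b z / (t : ℂ) with hφ₁def
  set φ₂ : ℝ → ℂ := fun z => (h z : ℂ) * Complex.exp (Complex.I * ξ * z * t) * b z with hφ₂def
  -- integrability
  have hint1 : Integrable φ₁ volume := by
    have hbase0 : Integrable (fun z => ((deriv h z : ℝ) : ℂ) * Psi17 ξ (z * t)) volume := by
      apply Continuous.integrable_of_hasCompactSupport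
      · exact (Complex.continuous_ofReal.comp hh'c).mul hPsiC
      · exact ((hsupp.deriv).comp_left Complex.ofReal_zero).mul_right
    have hbase := hbase0.div_const (t : ℂ)
    have h2 := hbase.bdd_mul hbm (Eventually.of_forall hbC)
    apply h2.congr
    filter_upwards with z
    simp only [hφ₁def]
    ring
  have hint2 : Integrable φ₂ volume := by
    have hbase : Integrable (fun z => (h z : ℂ) * Complex.exp (Complex.I * ξ * z * t)) volume := by
      apply Continuous.integrable_of_hasCompactSupport
      · exact (Complex.continuous_ofReal.comp hhc).mul hexpC
      · exact (hsupp.comp_left Complex.ofReal_zero).mul_right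
    have h2 := hbase.bdd_mul hbm (Eventually.of_forall hbC)
    apply h2.congr
    filter_upwards with z
    simp only [hφ₂def]
    ring
  -- countable exceptional set
  set S : Set ℝ := {z : ℝ | ∃ k : ℤ, z * t = k} with hSdef
  have hScount : S.Countable := by
    have hsub : S ⊆ Set.range (fun k : ℤ => (k : ℝ) / t) := by
      rintro z ⟨k, hk⟩
      exact ⟨k, by show (k:ℝ) / t = z; rw [← hk]; field_simp⟩
    exact (Set.countable_range _).mono hsub
  -- local structure off S
  have hloc : ∀ z₀ : ℝ, (∀ k : ℤ, z₀ * t ≠ k) →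
      g =ᶠ[𝓝 z₀] fun z => (h z : ℂ) * Psi17 ξ (z * t) * F (⌊z₀ * t⌋).toNat / (t : ℂ) := by
    intro z₀ hz₀
    have h1 : ((⌊z₀ * t⌋ : ℤ) : ℝ) < z₀ * t :=
      lt_of_le_of_ne (Int.floor_le _) (Ne.symm (hz₀ _))
    have h2 : z₀ * t < ((⌊z₀ * t⌋ : ℤ) : ℝ) + 1 := Int.lt_floor_add_one _
    have hmem : z₀ ∈ Set.Ioo (((⌊z₀ * t⌋ : ℤ) : ℝ) / t) ((((⌊z₀ * t⌋ : ℤ) : ℝ) + 1) / t) :=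
      ⟨(div_lt_iff₀ ht).mpr (by linarith), (lt_div_iff₀ ht).mpr (by linarith)⟩
    filter_upwards [Ioo_mem_nhds hmem.1 hmem.2] with z hzI
    have hfl : ⌊z * t⌋ = ⌊z₀ * t⌋ := by
      rw [Int.floor_eq_iff]
      constructor
      · exact le_of_lt ((div_lt_iff₀ ht).mp hzI.1)
      · have := (lt_div_iff₀ ht).mp hzI.2
        push_cast
        linarith
    simp only [hgdef, hbdef, hfl]
  -- continuity of g
  have hgc : Continuous g := by
    rw [continuous_iff_continuousAt]
    intro z₀
    by_cases hz : ∃ k : ℤ, z₀ * t = k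
    · obtain ⟨k, hk⟩ := hz
      have hg0 : g z₀ = 0 := by
        simp only [hgdef, hk, Psi17_int hξ, mul_zero, zero_mul, zero_div]
      have hbound : ∀ z, ‖g z‖ ≤ |h z| * ‖Psi17 ξ (z * t)‖ * C / t := by
        intro z
        have : ‖g z‖ = |h z| * ‖Psi17 ξ (z * t)‖ * ‖b z‖ / t := by
          simp only [hgdef, norm_div, norm_mul, Complex.norm_real, Real.norm_eq_abs,
            abs_of_pos ht]
        rw [this]
        gcongr
        exact hbC z
      have hGc : Continuous (fun z => |h z| * ‖Psi17 ξ (z * t)‖ * C / t) :=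
        (((hhc.abs).mul hPsiC.norm).mul continuous_const).div_const t
      have hG0 : |h z₀| * ‖Psi17 ξ (z₀ * t)‖ * C / t = 0 := by
        rw [hk, Psi17_int hξ]
        simp
      unfold ContinuousAt
      rw [hg0]
      refine squeeze_zero_norm hbound ?_
      have := hGc.continuousAt (x := z₀)
      rwa [ContinuousAt, hG0] at this
    · push_neg at hz
      have hev := hloc z₀ hz
      have hlc : Continuous fun z => (h z : ℂ) * Psi17 ξ (z * t) * F (⌊z₀ * t⌋).toNat / (t : ℂ) :=
        (((Complex.continuous_ofReal.comp hhc).mul hPsiC).mul continuous_const).div_const _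
      exact hlc.continuousAt.congr hev.symm
  -- derivative of g off S
  have hderiv : ∀ z₀ ∈ Set.Ioo (0:ℝ) R \ S, HasDerivAt g (φ₁ z₀ + φ₂ z₀) z₀ := by
    rintro z₀ ⟨-, hz₀S⟩
    have hz₀ : ∀ k : ℤ, z₀ * t ≠ k := by
      intro k hk
      exact hz₀S ⟨k, hk⟩
    have hev := hloc z₀ hz₀
    have Hh : HasDerivAt (fun z : ℝ => ((h z : ℝ) : ℂ)) ((deriv h z₀ : ℝ) : ℂ) z₀ :=
      (((hh.differentiable one_ne_zero) z₀).hasDerivAt).ofReal_comp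
    have HP := Psi17_hasDeriv hξ0 t z₀
    have Hmul := ((Hh.mul HP).mul_const (F (⌊z₀ * t⌋).toNat)).div_const (t : ℂ)
    have Hg := Hmul.congr_of_eventuallyEq hev
    refine Hg.congr_deriv ?_
    simp only [hφ₁def, hφ₂def, hbdef]
    field_simp
  -- FTC
  have hIa : IntervalIntegrable φ₁ volume 0 R := hint1.intervalIntegrable
  have hIb : IntervalIntegrable φ₂ volume 0 R := hint2.intervalIntegrable
  have hftc := integral_eq_of_hasDerivAt_off_countable_of_le g (fun z => φ₁ z + φ₂ z)
    hR0.le hScount hgc.continuousOn hderiv ((hint1.add hint2).intervalIntegrable)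
  have hgR : g R = 0 := by simp [hgdef, hhR R le_rfl]
  have hgz : g 0 = 0 := by simp [hgdef, hz0 0 le_rfl]
  rw [hgR, hgz, sub_zero, intervalIntegral.integral_add hIa hIb] at hftc
  have hkey : ∫ z in (0:ℝ)..R, φ₂ z = -∫ z in (0:ℝ)..R, φ₁ z :=
    eq_neg_of_add_eq_zero_left (by linear_combination hftc)
  -- identify LHS with interval integral of φ₂
  have e1 : ∫ z in Set.Ioi (0:ℝ), φ₂ z = ∫ z, φ₂ z := by
    apply setIntegral_eq_integral_of_forall_compl_eq_zero
    intro z hz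
    have hz' : h z = 0 := hz0 z (by simpa using hz)
    simp [hφ₂def, hz']
  have e2 : ∫ z in Set.Ioc (0:ℝ) R, φ₂ z = ∫ z, φ₂ z := by
    apply setIntegral_eq_integral_of_forall_compl_eq_zero
    intro z hz
    simp only [Set.mem_Ioc, not_and_or, not_le, not_lt] at hz
    have hz' : h z = 0 := by
      rcases hz with hz | hz
      · exact hz0 z hz
      · exact hhR z hz.le
    simp [hφ₂def, hz']
  have horig : (∫ z in Set.Ioi (0 : ℝ), (h z : ℂ) * Complex.exp (Complex.I * ξ * z * t) *
      ∫ x, (starRingEnd ℂ) (a₁ x) * a₂ (T^[(⌊z * t⌋).toNat] x) ∂ν)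
      = ∫ z in (0:ℝ)..R, φ₂ z := by
    rw [intervalIntegral.integral_of_le hR0.le, e2, ← e1]
  -- dominating function integrable
  have hdomint : Integrable (fun z => |deriv h z| * (2 / |ξ| * C / t)) volume := by
    apply Continuous.integrable_of_hasCompactSupport
    · exact (hh'c.abs).mul continuous_const
    · exact ((hsupp.deriv).comp_left abs_zero).mul_right
  have habs : Integrable (fun z => |deriv h z|) volume := by
    apply Continuous.integrable_of_hasCompactSupport hh'c.abs
    exact (hsupp.deriv).comp_left abs_zero
  rw [horig]
  calc ‖∫ z in (0:ℝ)..R, φ₂ z‖ = ‖∫ z in (0:ℝ)..R, φ₁ z‖ := by rw [hkey, norm_neg]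
  _ = ‖∫ z in Set.Ioc (0:ℝ) R, φ₁ z‖ := by rw [intervalIntegral.integral_of_le hR0.le]
  _ ≤ ∫ z in Set.Ioc (0:ℝ) R, ‖φ₁ z‖ := norm_integral_le_integral_norm _
  _ ≤ ∫ z in Set.Ioc (0:ℝ) R, |deriv h z| * (2 / |ξ| * C / t) := by
      apply setIntegral_mono_on hint1.norm.integrableOn hdomint.integrableOn measurableSet_Ioc
      intro z hz
      have hφn : ‖φ₁ z‖ = |deriv h z| * ‖Psi17 ξ (z * t)‖ * ‖b z‖ / t := by
        simp only [hφ₁def, norm_div, norm_mul, Complex.norm_real, Real.norm_eq_abs,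
          abs_of_pos ht]
      rw [hφn]
      have h2 : |deriv h z| * ‖Psi17 ξ (z * t)‖ * ‖b z‖ / t
          ≤ |deriv h z| * (2 / |ξ|) * C / t := by
        gcongr
        · exact Psi17_norm hξ0 _
        · exact hbC z
      refine h2.trans (le_of_eq ?_)
      ring
  _ = (∫ z in Set.Ioc (0:ℝ) R, |deriv h z|) * (2 / |ξ| * C / t) := integral_mul_const _ _
  _ ≤ (∫ z in Set.Ioi (0:ℝ), |deriv h z|) * (2 / |ξ| * C / t) := by
      apply mul_le_mul_of_nonneg_right
      · apply setIntegral_mono_set habs.integrableOn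
        · exact Eventually.of_forall fun z => abs_nonneg _
        · exact HasSubset.Subset.eventuallyLE Set.Ioc_subset_Ioi_self
      · positivity
  _ = 2 * C₁ * C₂ * (∫ z in Set.Ioi (0:ℝ), |deriv h z|) / (|ξ| * t) := by
      rw [hCdef]
      field_simp
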